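/- Let I = (G, {W_1, …, W_t}, k) be an instance of Partitioned Subset Treewidth and let (A, S, B) be a safe separation of I. If I is a yes-instance, then both I ◁ (A,S) and I ◁ (B,S) are yes-instances. -/

import Mathlib

open SimpleGraph

variable {V ι : Type*}

/-- The torso of `G` on a vertex set `X`: vertices `u ≠ v` of `X` are adjacent iff there is a
`u`–`v` walk in `G` all of whose internal vertices lie outside `X`. -/
def torsoGraph (G : SimpleGraph V) (X : Set V) : SimpleGraph V where
  Adj u v := u ≠ v ∧ u ∈ X ∧ v ∈ X ∧
    ∃ p : G.Walk u v, ∀ w ∈ p.support, w = u ∨ w = v ∨ w ∉ X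
  symm := by
    refine ⟨?_⟩
    rintro u v ⟨hne, hu, hv, p, hp⟩
    refine ⟨hne.symm, hv, hu, p.reverse, ?_⟩
    intro w hw
    rw [SimpleGraph.Walk.support_reverse, List.mem_reverse] at hw
    rcases hp w hw with h | h | h
    · exact Or.inr (Or.inl h)
    · exact Or.inl h
    · exact Or.inr (Or.inr h)
  loopless := ⟨fun _ h => h.1 rfl⟩

/-- `(T, bag)` is a tree decomposition of `G`. -/
structure IsTreeDecomp (G : SimpleGraph V) (T : SimpleGraph ι) (bag : ι → Set V) : Prop where
  tree : T.IsTree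
  mem_bag : ∀ v : V, ∃ t, v ∈ bag t
  edge_bag : ∀ ⦃u v : V⦄, G.Adj u v → ∃ t, u ∈ bag t ∧ v ∈ bag t
  conn : ∀ v : V, (T.induce {t | v ∈ bag t}).Connected

/-- `(X, (T, bag))` is a torso tree decomposition in `G`, i.e. `(T, bag)` is a tree
decomposition of `torsoGraph G X`. -/
structure IsTorsoTreeDecomp (G : SimpleGraph V) (X : Set V)
    (T : SimpleGraph ι) (bag : ι → Set V) : Prop where
  tree : T.IsTree
  bag_subset : ∀ t, bag t ⊆ X
  mem_bag : ∀ v ∈ X, ∃ t, v ∈ bag t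
  edge_bag : ∀ ⦃u v : V⦄, (torsoGraph G X).Adj u v → ∃ t, u ∈ bag t ∧ v ∈ bag t
  conn : ∀ v ∈ X, (T.induce {t | v ∈ bag t}).Connected

/-- `G` has treewidth at most `k`. -/
def HasTreewidthAtMost (G : SimpleGraph V) (k : ℕ) : Prop :=
  ∃ (n : ℕ) (T : SimpleGraph (Fin n)) (bag : Fin n → Set V),
    IsTreeDecomp G T bag ∧ ∀ t, (bag t).ncard ≤ k + 1

/-- `S` is an `(X, Y)`-separator in `G`: every walk from `X` to `Y` meets `S`. -/
def IsSep (G : SimpleGraph V) (X Y S : Set V) : Prop :=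
  ∀ ⦃x y : V⦄, x ∈ X → y ∈ Y → ∀ p : G.Walk x y, ∃ s ∈ S, s ∈ p.support

/-- The maximum number of vertex-disjoint `X`–`Y` paths; by Menger's theorem this equals the
minimum size of an `(X, Y)`-separator, which is how we define it. -/
noncomputable def flowG (G : SimpleGraph V) (X Y : Set V) : ℕ :=
  sInf (Set.ncard '' {S : Set V | IsSep G X Y S})

/-- `X` is linked into `Y`. -/
def LinkedInto (G : SimpleGraph V) (X Y : Set V) : Prop :=
  flowG G X Y = X.ncard

/-- `X` is strictly linked into `Y`. -/
def StrictlyLinkedInto (G : SimpleGraph V) (X Y : Set V) : Prop :=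
  LinkedInto G X Y ∧
    ∀ S : Set V, IsSep G X Y S → S.ncard = X.ncard → S = X ∨ S = Y

/-- `R_G(X, S)`: the set of vertices of `G \ S` reachable from `X \ S`. -/
def reachG (G : SimpleGraph V) (X S : Set V) : Set V :=
  {v | ∃ x ∈ X, x ∉ S ∧ ∃ p : G.Walk x v, ∀ w ∈ p.support, w ∉ S}

/-- `S` is a minimal `(X, Y)`-separator. -/
def IsMinimalSep (G : SimpleGraph V) (X Y S : Set V) : Prop :=
  IsSep G X Y S ∧ ∀ S' : Set V, S' ⊂ S → ¬ IsSep G X Y S'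

/-- `S` is an important `(A, B)`-separator. -/
def IsImportantSep (G : SimpleGraph V) (A B S : Set V) : Prop :=
  IsMinimalSep G A B S ∧
    ¬ ∃ S' : Set V, IsSep G A B S' ∧ S'.ncard ≤ S.ncard ∧ reachG G A S ⊂ reachG G A S'

/-- The important `(A, B)`-separator `S'` dominates the `(A, B)`-separator `S`. -/
def DominatesSep (G : SimpleGraph V) (A B S S' : Set V) : Prop :=
  IsImportantSep G A B S' ∧ S'.ncard ≤ S.ncard ∧ reachG G A S ⊆ reachG G A S'

/-- `(A, S, B)` is a separation of `G`. -/
structure IsSeparation (G : SimpleGraph V) (A S B : Set V) : Prop where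
  disjoint_AS : Disjoint A S
  disjoint_AB : Disjoint A B
  disjoint_SB : Disjoint S B
  union_eq : A ∪ S ∪ B = Set.univ
  no_adj : ∀ ⦃a b : V⦄, a ∈ A → b ∈ B → ¬ G.Adj a b

open Classical in
/-- The flow potential `flp_G(X, Y)`. -/
noncomputable def flpG (G : SimpleGraph V) (X Y : Set V) : ℕ :=
  if X = Set.univ then X.ncard
  else sInf {n : ℕ | ∃ A S B : Set V, IsSeparation G A S B ∧
    X ⊆ A ∪ S ∧ Y ⊆ B ∪ S ∧ B.Nonempty ∧ S.ncard = n}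

/-- The graph consisting of a clique on `S` (and no other edges). -/
def cliqueOn (S : Set V) : SimpleGraph V where
  Adj u v := u ≠ v ∧ u ∈ S ∧ v ∈ S
  symm := ⟨fun _ _ ⟨h, hu, hv⟩ => ⟨h.symm, hv, hu⟩⟩
  loopless := ⟨fun _ h => h.1 rfl⟩

/-- `G ⊗ S`: the graph obtained from `G` by making `S` a clique. -/
def addCliqueG (G : SimpleGraph V) (S : Set V) : SimpleGraph V := G ⊔ cliqueOn S

/-- `(G, Ws, k)` is an instance of Partitioned Subset Treewidth: `Ws` is a finite nonempty
family of terminal cliques, `k ≥ 1`, each terminal clique being a clique of `G` of size at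
most `k + 1`. -/
def IsPSTWInstance (G : SimpleGraph V) (Ws : Set (Set V)) (k : ℕ) : Prop :=
  Ws.Finite ∧ Ws.Nonempty ∧ 1 ≤ k ∧ ∀ W ∈ Ws, G.IsClique W ∧ W.ncard ≤ k + 1

/-- `(X, (T, bag))` is a solution of the instance `(G, Ws, k)`. -/
def IsSolutionTD (G : SimpleGraph V) (Ws : Set (Set V)) (k : ℕ)
    (X : Set V) (T : SimpleGraph ι) (bag : ι → Set V) : Prop :=
  IsTorsoTreeDecomp G X T bag ∧ ⋃₀ Ws ⊆ X ∧ ∀ t, (bag t).ncard ≤ k + 1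

/-- The instance `(G, Ws, k)` is a yes-instance. -/
def IsYesInstance (G : SimpleGraph V) (Ws : Set (Set V)) (k : ℕ) : Prop :=
  ∃ (κ : Type) (T : SimpleGraph κ) (bag : κ → Set V) (X : Set V),
    IsSolutionTD G Ws k X T bag

/-- `W̄_I(W)`: the union of the terminal cliques other than `W`. -/
def otherUnion (Ws : Set (Set V)) (W : Set V) : Set V := ⋃₀ (Ws \ {W})

/-- `flp_I(W) = flp_G(W, W̄_I(W))`. -/
noncomputable def flpInst (G : SimpleGraph V) (Ws : Set (Set V)) (W : Set V) : ℕ :=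
  flpG G W (otherUnion Ws W)

/-- `(A, S, B)` is a safe separation of the instance `(G, Ws, k)`. -/
def IsSafeSeparation (G : SimpleGraph V) (Ws : Set (Set V)) (A S B : Set V) : Prop :=
  IsSeparation G A S B ∧ A.Nonempty ∧ B.Nonempty ∧
    ∃ Wa ∈ Ws, ∃ Wb ∈ Ws,
      LinkedInto G S ((A ∪ S) ∩ Wa) ∧ LinkedInto G S ((B ∪ S) ∩ Wb)

/-- `Ws ◁ (A, S)`: remove the terminal cliques not meeting `A`, then insert `S` if no superset
of `S` is present. -/
def restrictCliques (Ws : Set (Set V)) (A S : Set V) : Set (Set V) :=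
  {W ∈ Ws | (W ∩ A).Nonempty} ∪
    {W | W = S ∧ ¬ ∃ W' ∈ Ws, (W' ∩ A).Nonempty ∧ S ⊆ W'}

/-- `G ◁ (A, S) = G[A ∪ S] ⊗ S`, as a graph on the vertex set `A ∪ S`. -/
def restrictGraph (G : SimpleGraph V) (A S : Set V) : SimpleGraph ↥(A ∪ S) :=
  addCliqueG (G.induce (A ∪ S)) (Subtype.val ⁻¹' S)

/-- The terminal cliques of `I ◁ (A, S)`, viewed as subsets of the vertex set `A ∪ S`. -/
def restrictSets (Ws : Set (Set V)) (A S : Set V) : Set (Set ↥(A ∪ S)) :=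
  (fun W => Subtype.val ⁻¹' W) '' restrictCliques Ws A S

/-- The terminal cliques of `I × (Wi, Wj)`. -/
def mergeCliques (Ws : Set (Set V)) (Wi Wj : Set V) : Set (Set V) :=
  insert (Wi ∪ Wj) (Ws \ {Wi, Wj})

/-- The terminal cliques of `I + (W, ·)`, replacing `W` by `W'`. -/
def replaceClique (Ws : Set (Set V)) (W W' : Set V) : Set (Set V) :=
  insert W' (Ws \ {W})

/-- The instance `(G, Ws, k)` is maximally merged. -/
def MaximallyMerged (G : SimpleGraph V) (Ws : Set (Set V)) (k : ℕ) : Prop :=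
  ∀ Wi ∈ Ws, ∀ Wj ∈ Ws, Wi ≠ Wj → (Wi ∪ Wj).ncard ≤ k + 1 →
    ¬ IsYesInstance (addCliqueG G (Wi ∪ Wj)) (mergeCliques Ws Wi Wj) k

/-- `Wi` is a potential forget-clique of the instance `(G, Ws, k)`. -/
def IsPotentialForgetClique (G : SimpleGraph V) (Ws : Set (Set V)) (k : ℕ)
    (Wi : Set V) : Prop :=
  ∃ (κ : Type) (T : SimpleGraph κ) (bag : κ → Set V) (X : Set V),
    IsSolutionTD G Ws k X T bag ∧
    ∃ l p : κ, T.Adj l p ∧ (∀ q, T.Adj l q → q = p) ∧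
      Wi ⊆ bag l ∧ ∃ w ∈ Wi \ otherUnion Ws Wi, bag p = bag l \ {w}

/-- The disjoint union of two trees together with one extra edge between `a` and `b`. -/
def glueTrees {ι₁ ι₂ : Type*} (T₁ : SimpleGraph ι₁) (T₂ : SimpleGraph ι₂)
    (a : ι₁) (b : ι₂) : SimpleGraph (ι₁ ⊕ ι₂) where
  Adj x y :=
    (∃ u v, T₁.Adj u v ∧ x = Sum.inl u ∧ y = Sum.inl v) ∨
    (∃ u v, T₂.Adj u v ∧ x = Sum.inr u ∧ y = Sum.inr v) ∨
    (x = Sum.inl a ∧ y = Sum.inr b) ∨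
    (x = Sum.inr b ∧ y = Sum.inl a)
  symm := by
    refine ⟨?_⟩
    rintro x y (⟨u, v, h, rfl, rfl⟩ | ⟨u, v, h, rfl, rfl⟩ | ⟨rfl, rfl⟩ | ⟨rfl, rfl⟩)
    · exact Or.inl ⟨v, u, h.symm, rfl, rfl⟩
    · exact Or.inr (Or.inl ⟨v, u, h.symm, rfl, rfl⟩)
    · exact Or.inr (Or.inr (Or.inr ⟨rfl, rfl⟩))
    · exact Or.inr (Or.inr (Or.inl ⟨rfl, rfl⟩))
  loopless := by
    refine ⟨?_⟩
    rintro x (⟨u, v, h, rfl, he⟩ | ⟨u, v, h, rfl, he⟩ | ⟨rfl, he⟩ | ⟨rfl, he⟩)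
    · exact h.ne (Sum.inl.inj he)
    · exact h.ne (Sum.inr.inj he)
    · exact Sum.inl_ne_inr he
    · exact Sum.inr_ne_inl he

/-- The sum of the weights `d` over the set `S`. -/
noncomputable def setSum [Finite V] (d : V → ℕ) (S : Set V) : ℕ :=
  ∑ v ∈ S.toFinite.toFinset, d v

/-! ### Auxiliary machinery for the proof -/

section Aux

open SimpleGraph Walk

variable {W : Type} {G : SimpleGraph W}

/-- First hit of a walk on a set `C`. -/
lemma exists_firstHit [DecidableEq W] {a b : W} (C : Set W) (p : G.Walk a b)
    (h : ∃ c ∈ C, c ∈ p.support) :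
    ∃ c ∈ C, ∃ q : G.Walk a c,
      (∀ w ∈ q.support, w ∈ C → w = c) ∧
      q.support.count c = 1 ∧
      (∀ z, q.support.count z ≤ p.support.count z) ∧
      (∀ e ∈ q.edges, e ∈ p.edges) := by
  induction p with
  | nil =>
    obtain ⟨c, hc, hcs⟩ := h
    simp only [support_nil, List.mem_singleton] at hcs
    subst hcs
    exact ⟨c, hc, Walk.nil, by simp, by simp, fun z => le_rfl, by simp⟩
  | @cons u v w h' p' ih =>
    by_cases hu : u ∈ C
    · refine ⟨u, hu, Walk.nil, by simp, by simp, fun z => ?_, by simp⟩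
      simp only [support_nil, support_cons]
      rcases eq_or_ne z u with rfl | hz
      · simp
      · simp [List.count_cons, hz.symm]
    · have h2 : ∃ c ∈ C, c ∈ p'.support := by
        obtain ⟨c, hc, hcs⟩ := h
        rw [support_cons, List.mem_cons] at hcs
        rcases hcs with rfl | hcs
        · exact absurd hc hu
        · exact ⟨c, hc, hcs⟩
      obtain ⟨c, hc, q, hq1, hq2, hq3, hq4⟩ := ih h2
      have hcu : c ≠ u := fun h => hu (h ▸ hc)
      refine ⟨c, hc, Walk.cons h' q, ?_, ?_, fun z => ?_, ?_⟩
      · intro x hx hxC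
        rw [support_cons, List.mem_cons] at hx
        rcases hx with rfl | hx
        · exact absurd hxC hu
        · exact hq1 x hx hxC
      · rw [support_cons, List.count_cons]
        simp [hq2, hcu.symm]
      · rw [support_cons, support_cons, List.count_cons, List.count_cons]
        exact Nat.add_le_add_right (hq3 z) _
      · intro e he
        rw [edges_cons, List.mem_cons] at he ⊢
        rcases he with rfl | he
        · exact Or.inl rfl
        · exact Or.inr (hq4 e he)

lemma isSep_comm {X Y S : Set W} (h : IsSep G X Y S) : IsSep G Y X S := by
  intro y x hy hx p
  obtain ⟨s, hs, hsp⟩ := h hx hy p.reverse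
  rw [support_reverse, List.mem_reverse] at hsp
  exact ⟨s, hs, hsp⟩

/-- A family of `k` pairwise vertex-disjoint `A`–`B` walks. -/
def DisjWalks (G : SimpleGraph W) (A B : Set W) (k : ℕ) : Prop :=
  ∃ (st en : Fin k → W) (w : (i : Fin k) → G.Walk (st i) (en i)),
    (∀ i, st i ∈ A) ∧ (∀ i, en i ∈ B) ∧
    ∀ i j, i ≠ j → ∀ v, v ∈ (w i).support → v ∉ (w j).support

lemma walk_nil_of_no_edges (hE : G.edgeSet = ∅) {u v : W} (p : G.Walk u v) :
    u = v ∧ p.support = [u] := by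
  cases p with
  | nil => simp
  | cons h p' =>
    exact absurd (G.mem_edgeSet.mpr h) (by simp [hE])

lemma disjWalks_of_no_edges [Fintype W] (hE : G.edgeSet = ∅) {A B : Set W} {k : ℕ}
    (hsep : ∀ C : Set W, IsSep G A B C → k ≤ C.ncard) : DisjWalks G A B k := by
  have hAB : IsSep G A B (A ∩ B) := by
    intro x y hx hy p
    obtain ⟨rfl, hsupp⟩ := walk_nil_of_no_edges hE p
    exact ⟨x, ⟨hx, hy⟩, by simp [hsupp]⟩
  have hk : k ≤ (A ∩ B).ncard := hsep _ hAB
  classical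
  have hcard : (A ∩ B).ncard = (A ∩ B).toFinset.card := by
    rw [Set.ncard_eq_toFinset_card']
  rw [hcard] at hk
  obtain ⟨t, ht, htc⟩ := Finset.exists_subset_card_eq hk
  refine ⟨fun i => (t.equivFin.symm (Fin.cast htc.symm i)).1,
    fun i => (t.equivFin.symm (Fin.cast htc.symm i)).1,
    fun i => Walk.nil, fun i => ?_, fun i => ?_, fun i j hij v hvi hvj => ?_⟩
  · have h2 := ht (t.equivFin.symm (Fin.cast htc.symm i)).2
    rw [Set.mem_toFinset] at h2
    exact h2.1
  · have h2 := ht (t.equivFin.symm (Fin.cast htc.symm i)).2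
    rw [Set.mem_toFinset] at h2
    exact h2.2
  · simp only [support_nil, List.mem_singleton] at hvi hvj
    subst hvi
    apply hij
    have h3 := t.equivFin.symm.injective (Subtype.ext hvj)
    exact Fin.cast_injective _ h3

lemma mem_of_count_walk [DecidableEq W] {u v u' v' z : W} {p : G.Walk u v} {q : G.Walk u' v'}
    (h : ∀ x, p.support.count x ≤ q.support.count x) (hz : z ∈ p.support) :
    z ∈ q.support := by
  have h1 : 0 < p.support.count z := List.count_pos_iff.mpr hz
  exact List.count_pos_iff.mp (lt_of_lt_of_le h1 (h z))

lemma two_le_count_of_mem_takeUntil [DecidableEq W] {u c v : W} {p : G.Walk u c}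
    (hv : v ∈ p.support) (hvc : v ≠ c) (hc : c ∈ (p.takeUntil v hv).support) :
    2 ≤ p.support.count c := by
  conv_rhs => rw [← take_spec p hv]
  rw [support_append, List.count_append]
  have h1 : 1 ≤ (p.takeUntil v hv).support.count c := List.count_pos_iff.mpr hc
  have h2 : c ∈ (p.dropUntil v hv).support.tail := by
    have h3 : c ∈ (p.dropUntil v hv).support := end_mem_support _
    have h4 : (p.dropUntil v hv).support = v :: (p.dropUntil v hv).support.tail :=
      support_eq_cons _
    rw [h4, List.mem_cons] at h3
    rcases h3 with h3 | h3
    · exact absurd h3.symm hvc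
    · exact h3
  have h5 : 1 ≤ (p.dropUntil v hv).support.tail.count c := List.count_pos_iff.mpr h2
  omega

/-- Two walks meeting `C` exactly once, at their distinct endpoints, are disjoint
(given that `C` separates their start sets). -/
lemma cross_disjoint {H : SimpleGraph W} [DecidableEq W] {A B C : Set W}
    (hC : IsSep H A B C) {sa ca sb cb v : W}
    (hsa : sa ∈ A) (hsb : sb ∈ B) (hca : ca ∈ C) (hcb : cb ∈ C)
    (P : H.Walk sa ca) (Q : H.Walk sb cb)
    (hPC : ∀ w ∈ P.support, w ∈ C → w = ca) (hQC : ∀ w ∈ Q.support, w ∈ C → w = cb)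
    (hPcnt : P.support.count ca = 1) (hQcnt : Q.support.count cb = 1)
    (hne : ca ≠ cb) (hvP : v ∈ P.support) (hvQ : v ∈ Q.support) : False := by
  set w₁ : H.Walk sa sb := (P.takeUntil v hvP).append (Q.takeUntil v hvQ).reverse with hw₁
  obtain ⟨s, hsC, hs⟩ := hC hsa hsb w₁
  rw [hw₁, mem_support_append_iff, support_reverse, List.mem_reverse] at hs
  rcases hs with hs | hs
  · have hsca : s = ca := hPC s (support_takeUntil_subset _ _ hs) hsC
    rw [hsca] at hs
    rcases eq_or_ne v ca with rfl | hvca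
    · exact hne (hQC v hvQ hca)
    · exact absurd hPcnt (by
        have := two_le_count_of_mem_takeUntil hvP hvca hs
        omega)
  · have hscb : s = cb := hQC s (support_takeUntil_subset _ _ hs) hsC
    rw [hscb] at hs
    rcases eq_or_ne v cb with rfl | hvcb
    · exact hne (hPC v hvP hcb).symm
    · exact absurd hQcnt (by
        have := two_le_count_of_mem_takeUntil hvQ hvcb hs
        omega)

lemma isSep_of_isSep_deleteEdge [DecidableEq W] {A₀ B₀ C D : Set W} {x y : W}
    (hC : IsSep G A₀ B₀ C) (hx : x ∈ C) (hy : y ∈ C) (hxy : x ≠ y)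
    (hD : IsSep (G.deleteEdges {s(x, y)}) A₀ C D) : IsSep G A₀ B₀ D := by
  intro a b ha hb p
  obtain ⟨c, hcC, q, hq1, _, hq3, hq4⟩ := exists_firstHit C p (hC ha hb p)
  have hxe : s(x, y) ∉ q.edges := by
    intro he
    have h1 : x = c := hq1 x (Walk.fst_mem_support_of_mem_edges q he) hx
    have h2 : y = c := hq1 y (Walk.snd_mem_support_of_mem_edges q he) hy
    exact hxy (h1.trans h2.symm)
  have hqe : ∀ e ∈ q.edges, e ∈ (G.deleteEdges {s(x, y)}).edgeSet := by
    intro e he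
    rw [SimpleGraph.edgeSet_deleteEdges]
    refine ⟨q.edges_subset_edgeSet he, ?_⟩
    simp only [Set.mem_singleton_iff]
    rintro rfl
    exact hxe he
  obtain ⟨s, hsD, hs⟩ := hD ha hcC (q.transfer _ hqe)
  rw [support_transfer] at hs
  exact ⟨s, hsD, mem_of_count_walk hq3 hs⟩

lemma disjWalks_trim [DecidableEq W] {H : SimpleGraph W} {A C : Set W} {k : ℕ}
    (dw : DisjWalks H A C k) :
    ∃ (st c : Fin k → W) (w : (i : Fin k) → H.Walk (st i) (c i)),
      (∀ i, st i ∈ A) ∧ (∀ i, c i ∈ C) ∧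
      (∀ i, ∀ v ∈ (w i).support, v ∈ C → v = c i) ∧
      (∀ i, (w i).support.count (c i) = 1) ∧
      (∀ i j, i ≠ j → ∀ v, v ∈ (w i).support → v ∉ (w j).support) := by
  obtain ⟨st, en, w, hst, hen, hdisj⟩ := dw
  choose c hc q h1 h2 h3 h4 using fun i =>
    exists_firstHit C (w i) ⟨en i, hen i, end_mem_support _⟩
  exact ⟨st, c, q, hst, hc, h1, h2, fun i j hij v hvi hvj =>
    hdisj i j hij v (mem_of_count_walk (h3 i) hvi) (mem_of_count_walk (h3 j) hvj)⟩

lemma surj_of_inj_card {k : ℕ} {C : Set W} (hC : C.Finite) (hk : C.ncard = k)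
    {f : Fin k → W} (hmem : ∀ i, f i ∈ C) (hinj : Function.Injective f) :
    ∀ z ∈ C, ∃ i, f i = z := by
  haveI := hC.fintype
  have hcard : Fintype.card C = k := by
    rw [← Set.toFinset_card, ← Set.ncard_eq_toFinset_card', hk]
  have hbij : Function.Bijective (fun i => (⟨f i, hmem i⟩ : C)) := by
    rw [Fintype.bijective_iff_injective_and_card]
    constructor
    · intro i j hij
      exact hinj (congrArg Subtype.val hij)
    · simp [hcard]
  intro z hz
  obtain ⟨i, hi⟩ := hbij.2 ⟨z, hz⟩
  exact ⟨i, congrArg Subtype.val hi⟩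

/-- Menger's theorem (hard direction), in set/walk form. -/
theorem menger_aux [Fintype W] [DecidableEq W] :
    ∀ (n : ℕ) (G : SimpleGraph W), G.edgeSet.ncard ≤ n →
      ∀ (A B : Set W) (k : ℕ), (∀ C : Set W, IsSep G A B C → k ≤ C.ncard) →
        DisjWalks G A B k := by
  intro n
  induction n with
  | zero =>
    intro G hG A B k hsep
    have hE : G.edgeSet = ∅ := by
      rw [← Set.ncard_eq_zero (Set.toFinite _)]
      omega
    exact disjWalks_of_no_edges hE hsep
  | succ n ih =>
    intro G hG A B k hsep
    by_cases hE : G.edgeSet = ∅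
    · exact disjWalks_of_no_edges hE hsep
    · obtain ⟨ed, hed⟩ := Set.nonempty_iff_ne_empty.mpr hE
      induction ed using Sym2.ind with
      | _ x y =>
      have hxy : G.Adj x y := G.mem_edgeSet.mp hed
      have hne : x ≠ y := hxy.ne
      -- the contraction map
      set m : W → W := fun z => if z = y then x else z with hm
      have hmy : m y = x := if_pos rfl
      have hmx : m x = x := if_neg hne
      have hmz : ∀ z, z ≠ y → m z = z := fun z hz => if_neg hz
      have hmney : ∀ z, m z ≠ y := by
        intro z
        by_cases hz : z = y
        · rw [hz, hmy]; exact hne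
        · rw [hmz z hz]; exact hz
      have hm_eq : ∀ {a b : W}, m a = m b → a ≠ b → ({a, b} : Set W) = {x, y} := by
        intro a b hab hne'
        by_cases ha : a = y <;> by_cases hb : b = y
        · exact absurd (ha.trans hb.symm) hne'
        · rw [hmz b hb] at hab
          rw [ha, hmy] at hab
          rw [ha, ← hab]
          exact Set.pair_comm y x
        · rw [hmz a ha] at hab
          rw [hb, hmy] at hab
          rw [hb, hab]
        · rw [hmz a ha, hmz b hb] at hab
          exact absurd hab hne'
      have hadj_of_pair : ∀ {a b : W}, ({a, b} : Set W) = {x, y} → G.Adj a b := by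
        intro a b hab
        have ha : a ∈ ({x, y} : Set W) := hab ▸ Set.mem_insert a {b}
        have hb : b ∈ ({x, y} : Set W) := hab ▸ Set.mem_insert_of_mem a rfl
        have hne' : a ≠ b := by
          intro h
          subst h
          have hx' : x ∈ ({a} : Set W) := by
            rw [show ({a} : Set W) = {a, a} from (Set.pair_eq_singleton a).symm, hab]
            exact Set.mem_insert x {y}
          have hy' : y ∈ ({a} : Set W) := by
            rw [show ({a} : Set W) = {a, a} from (Set.pair_eq_singleton a).symm, hab]
            exact Set.mem_insert_of_mem x rfl
          rw [Set.mem_singleton_iff] at hx' hy'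
          exact hne (hx'.trans hy'.symm)
        rcases ha with ha | ha <;> rcases hb with hb | hb
        · exact absurd (by rw [ha, hb] : a = b) hne'
        · rw [ha, hb]; exact hxy
        · rw [ha, hb]; exact hxy.symm
        · exact absurd (by rw [ha, hb] : a = b) hne'
      -- the contracted graph
      set G₁ : SimpleGraph W :=
        SimpleGraph.fromRel (fun p q => ∃ p' q', G.Adj p' q' ∧ m p' = p ∧ m q' = q) with hG₁
      have hadj₁ : ∀ {a b : W}, G₁.Adj a b ↔
          a ≠ b ∧ ∃ a' b', G.Adj a' b' ∧ m a' = a ∧ m b' = b := by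
        intro a b
        rw [hG₁, SimpleGraph.fromRel_adj]
        constructor
        · rintro ⟨hab, ⟨a', b', h1, h2, h3⟩ | ⟨b', a', h1, h2, h3⟩⟩
          · exact ⟨hab, a', b', h1, h2, h3⟩
          · exact ⟨hab, a', b', h1.symm, h3, h2⟩
        · rintro ⟨hab, a', b', h1, h2, h3⟩
          exact ⟨hab, Or.inl ⟨a', b', h1, h2, h3⟩⟩
      have contract_adj : ∀ {a b : W}, G.Adj a b → m a ≠ m b → G₁.Adj (m a) (m b) :=
        fun h hm' => hadj₁.mpr ⟨hm', _, _, h, rfl, rfl⟩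
      have y_not_support : ∀ {a b : W} (p : G₁.Walk a b), a ≠ y → y ∉ p.support := by
        intro a b p
        induction p with
        | nil => intro h; simp [h.symm]
        | cons h' p' ihp =>
          intro h
          rw [support_cons, List.mem_cons]
          push_neg
          refine ⟨fun hh => h hh.symm, ihp ?_⟩
          intro hh
          subst hh
          obtain ⟨_, a', b', _, _, hb'⟩ := hadj₁.mp h'
          exact hmney b' hb'
      -- edge count decreases
      have hcount : G₁.edgeSet.ncard ≤ n := by
        have hsub : G₁.edgeSet ⊆ Sym2.map m '' (G.edgeSet \ {s(x, y)}) := by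
          intro ed₁ hed₁
          induction ed₁ using Sym2.ind with
          | _ a b =>
          obtain ⟨hab, a', b', h1, h2, h3⟩ := hadj₁.mp (G₁.mem_edgeSet.mp hed₁)
          refine ⟨s(a', b'), ⟨G.mem_edgeSet.mpr h1, ?_⟩, by rw [Sym2.map_pair_eq, h2, h3]⟩
          simp only [Set.mem_singleton_iff, Sym2.eq_iff]
          rintro (⟨ha', hb'⟩ | ⟨ha', hb'⟩)
          · rw [ha', hmx] at h2
            rw [hb', hmy] at h3
            exact hab (h2.symm.trans h3)
          · rw [ha', hmy] at h2
            rw [hb', hmx] at h3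
            exact hab (h2.symm.trans h3)
        have h1 : G₁.edgeSet.ncard ≤ (G.edgeSet \ {s(x, y)}).ncard :=
          le_trans (Set.ncard_le_ncard hsub (Set.toFinite _))
            (Set.ncard_image_le (Set.toFinite _))
        have h2 : (G.edgeSet \ {s(x, y)}).ncard < G.edgeSet.ncard :=
          Set.ncard_diff_singleton_lt_of_mem hed (Set.toFinite _)
        omega
      -- contraction of walks
      have contract_walk : ∀ {u v : W} (p : G.Walk u v),
          ∃ q : G₁.Walk (m u) (m v), ∀ w ∈ q.support, ∃ z ∈ p.support, m z = w := by
        intro u v p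
        induction p with
        | nil => exact ⟨Walk.nil, by simp⟩
        | @cons u u' v h' p' ihp =>
          obtain ⟨q', hq'⟩ := ihp
          by_cases he : m u = m u'
          · refine ⟨q'.copy he.symm rfl, ?_⟩
            intro w hw
            rw [support_copy] at hw
            obtain ⟨z, hz, hzm⟩ := hq' w hw
            exact ⟨z, by simp [hz], hzm⟩
          · refine ⟨Walk.cons (contract_adj h' he) q', ?_⟩
            intro w hw
            rw [support_cons, List.mem_cons] at hw
            rcases hw with rfl | hw
            · exact ⟨u, by simp, rfl⟩
            · obtain ⟨z, hz, hzm⟩ := hq' w hw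
              exact ⟨z, by simp [hz], hzm⟩
      -- lifting of walks
      have lift_walk : ∀ {a b : W} (p : G₁.Walk a b) (u : W), m u = a →
          ∃ v, m v = b ∧ ∃ q : G.Walk u v, ∀ w ∈ q.support, m w ∈ p.support := by
        intro a b p
        induction p with
        | nil =>
          intro u hu
          exact ⟨u, hu, Walk.nil, by simp [hu]⟩
        | @cons a c b h' p' ihp =>
          intro u hu
          obtain ⟨hne', a', c', hA, ha', hc'⟩ := hadj₁.mp h'
          obtain ⟨v, hv, q', hq'⟩ := ihp c' hc'
          by_cases hu' : u = a'
          · subst hu'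
            refine ⟨v, hv, Walk.cons hA q', ?_⟩
            intro w hw
            rw [support_cons, List.mem_cons] at hw
            rcases hw with rfl | hw
            · simp [hu]
            · simp [hq' w hw]
          · have hmu : m u = m a' := by rw [hu, ha']
            have hadj' : G.Adj u a' := hadj_of_pair (hm_eq hmu hu')
            refine ⟨v, hv, Walk.cons hadj' (Walk.cons hA q'), ?_⟩
            intro w hw
            rw [support_cons, List.mem_cons] at hw
            rcases hw with rfl | hw
            · simp [hu]
            · rw [support_cons, List.mem_cons] at hw
              rcases hw with rfl | hw
              · simp [ha']
              · simp [hq' w hw]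
      by_cases hmin₁ : ∀ C : Set W, IsSep G₁ (m '' A) (m '' B) C → k ≤ C.ncard
      · -- Case 1: contract and lift
        obtain ⟨st, en, w, hst, hen, hdisj⟩ := ih G₁ hcount (m '' A) (m '' B) k hmin₁
        have hlift : ∀ i : Fin k, ∃ (u v : W) (q : G.Walk u v), u ∈ A ∧ v ∈ B ∧
            ∀ z ∈ q.support, m z ∈ (w i).support := by
          intro i
          obtain ⟨u, hu, hmu⟩ := hst i
          obtain ⟨v, hv, hq, hqsupp⟩ := lift_walk (w i) u hmu
          by_cases hvB : v ∈ B
          · exact ⟨u, v, hq, hu, hvB, hqsupp⟩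
          · obtain ⟨b, hbB, hmb⟩ := hen i
            have hbv : b ≠ v := fun h => hvB (h ▸ hbB)
            have hmbv : m b = m v := by rw [hmb, hv]
            have hadj' : G.Adj v b := (hadj_of_pair (hm_eq hmbv.symm (Ne.symm hbv)))
            refine ⟨u, b, hq.concat hadj', hu, hbB, ?_⟩
            intro z hz
            rw [support_concat, List.mem_append,
              List.mem_singleton] at hz
            rcases hz with hz | rfl
            · exact hqsupp z hz
            · rw [hmbv, hv]
              exact end_mem_support _
        choose u v q hu hv hsupp using hlift
        refine ⟨u, v, q, hu, hv, fun i j hij z hzi hzj => ?_⟩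
        exact hdisj i j hij (m z) (hsupp i z hzi) (hsupp j z hzj)
      · -- Case 2: a small separator in the contraction
        push_neg at hmin₁
        obtain ⟨C₁, hC₁sep, hC₁card⟩ := hmin₁
        set C₁' : Set W := C₁ \ {y} with hC₁'
        have hC₁'sep : IsSep G₁ (m '' A) (m '' B) C₁' := by
          intro a b ha hb p
          obtain ⟨s, hs, hsp⟩ := hC₁sep ha hb p
          have hay : a ≠ y := by
            obtain ⟨a₀, _, ha₀⟩ := ha
            rw [← ha₀]; exact hmney a₀
          have hsy : s ≠ y := by
            rintro rfl
            exact y_not_support p hay hsp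
          exact ⟨s, ⟨hs, hsy⟩, hsp⟩
        have hC₁'card : C₁'.ncard < k :=
          lt_of_le_of_lt (Set.ncard_le_ncard Set.diff_subset (Set.toFinite _)) hC₁card
        have hyC₁' : y ∉ C₁' := fun h => h.2 rfl
        have hxC₁' : x ∈ C₁' := by
          by_contra hxC
          have : IsSep G A B C₁' := by
            intro a b ha hb p
            obtain ⟨p₁, hp₁⟩ := contract_walk p
            obtain ⟨s, hs, hsp⟩ := hC₁'sep ⟨a, ha, rfl⟩ ⟨b, hb, rfl⟩ p₁
            obtain ⟨z, hz, hzm⟩ := hp₁ s hsp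
            have hzy : z ≠ y := by
              rintro rfl
              rw [hmy] at hzm
              exact hxC (hzm ▸ hs)
            rw [hmz z hzy] at hzm
            exact ⟨s, hs, hzm ▸ hz⟩
          have := hsep _ this
          omega
        set C : Set W := insert y C₁' with hC
        have hCsep : IsSep G A B C := by
          intro a b ha hb p
          obtain ⟨p₁, hp₁⟩ := contract_walk p
          obtain ⟨s, hs, hsp⟩ := hC₁'sep ⟨a, ha, rfl⟩ ⟨b, hb, rfl⟩ p₁
          obtain ⟨z, hz, hzm⟩ := hp₁ s hsp
          by_cases hzy : z = y
          · exact ⟨y, Set.mem_insert y _, hzy ▸ hz⟩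
          · rw [hmz z hzy] at hzm
            exact ⟨s, Set.mem_insert_of_mem y hs, hzm ▸ hz⟩
        have hCcard : C.ncard = k := by
          have h1 : C.ncard ≤ C₁'.ncard + 1 := Set.ncard_insert_le y C₁'
          have h2 : k ≤ C.ncard := hsep C hCsep
          omega
        have hxC : x ∈ C := Set.mem_insert_of_mem y hxC₁'
        have hyC : y ∈ C := Set.mem_insert y _
        -- the graph with the edge deleted
        set G' : SimpleGraph W := G.deleteEdges {s(x, y)} with hG'
        have hG'le : G' ≤ G := SimpleGraph.deleteEdges_le _
        have hup : ∀ {a b : W} (p : G'.Walk a b), ∃ q : G.Walk a b,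
            q.support = p.support := by
          intro a b p
          refine ⟨p.transfer G (fun e he =>
            SimpleGraph.edgeSet_mono hG'le (p.edges_subset_edgeSet he)), ?_⟩
          rw [support_transfer]
        have hG'count : G'.edgeSet.ncard ≤ n := by
          have h1 : G'.edgeSet = G.edgeSet \ {s(x, y)} := SimpleGraph.edgeSet_deleteEdges _
          have h2 : (G.edgeSet \ {s(x, y)}).ncard < G.edgeSet.ncard :=
            Set.ncard_diff_singleton_lt_of_mem hed (Set.toFinite _)
          rw [h1]
          omega
        have hCsep' : IsSep G' A B C := by
          intro a b ha hb p
          obtain ⟨q, hq⟩ := hup p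
          obtain ⟨s, hs, hsp⟩ := hCsep ha hb q
          exact ⟨s, hs, hq ▸ hsp⟩
        have hminA : ∀ D : Set W, IsSep G' A C D → k ≤ D.ncard := fun D hD =>
          hsep D (isSep_of_isSep_deleteEdge hCsep hxC hyC hne hD)
        have hminB : ∀ D : Set W, IsSep G' B C D → k ≤ D.ncard := fun D hD =>
          hsep D (isSep_comm (isSep_of_isSep_deleteEdge (isSep_comm hCsep) hxC hyC hne hD))
        obtain ⟨sA, cA, wA, hsA, hcA, hwAC, hwAcnt, hdisjA⟩ :=
          disjWalks_trim (ih G' hG'count A C k hminA)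
        obtain ⟨sB, cB, wB, hsB, hcB, hwBC, hwBcnt, hdisjB⟩ :=
          disjWalks_trim (ih G' hG'count B C k hminB)
        have hcAinj : Function.Injective cA := by
          intro i j hij
          by_contra hij'
          exact hdisjA i j hij' (cA i) (end_mem_support _)
            (by rw [hij]; exact end_mem_support _)
        have hcBinj : Function.Injective cB := by
          intro i j hij
          by_contra hij'
          exact hdisjB i j hij' (cB i) (end_mem_support _)
            (by rw [hij]; exact end_mem_support _)
        have hsurj := surj_of_inj_card (Set.toFinite C) hCcard hcB hcBinj
        choose τ hτ using fun i => hsurj (cA i) (hcA i)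
        have hτinj : Function.Injective τ := by
          intro i j hij
          apply hcAinj
          rw [← hτ i, ← hτ j, hij]
        -- cross disjointness
        have hcross : ∀ i j, cA i ≠ cB j →
            ∀ v, v ∈ (wA i).support → v ∉ (wB j).support := by
          intro i j hne' v hvi hvj
          exact cross_disjoint hCsep' (hsA i) (hsB j) (hcA i) (hcB j) (wA i) (wB j)
            (hwAC i) (hwBC j) (hwAcnt i) (hwBcnt j) hne' hvi hvj
        -- glue
        have hR : ∀ i : Fin k, ∃ q : G'.Walk (sA i) (sB (τ i)),
            ∀ z ∈ q.support, z ∈ (wA i).support ∨ z ∈ (wB (τ i)).support := by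
          intro i
          refine ⟨(wA i).append (((wB (τ i)).reverse).copy (hτ i) rfl), ?_⟩
          intro z hz
          rw [mem_support_append_iff] at hz
          rcases hz with hz | hz
          · exact Or.inl hz
          · rw [support_copy, support_reverse, List.mem_reverse] at hz
            exact Or.inr hz
        choose R hR using hR
        have hdisjR : ∀ i j, i ≠ j → ∀ v, v ∈ (R i).support → v ∉ (R j).support := by
          intro i j hij v hvi hvj
          rcases hR i v hvi with h1 | h1 <;> rcases hR j v hvj with h2 | h2
          · exact hdisjA i j hij v h1 h2
          · have : cA i ≠ cB (τ j) := by
              rw [hτ j]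
              intro h
              exact hij (hcAinj h)
            exact hcross i (τ j) this v h1 h2
          · have : cA j ≠ cB (τ i) := by
              rw [hτ i]
              intro h
              exact hij (hcAinj h).symm
            exact hcross j (τ i) this v h2 h1
          · exact hdisjB (τ i) (τ j) (fun h => hij (hτinj h)) v h1 h2
        -- transfer to G
        have hfin : ∀ i : Fin k, ∃ q : G.Walk (sA i) (sB (τ i)),
            q.support = (R i).support := fun i => hup (R i)
        choose Q hQ using hfin
        refine ⟨sA, fun i => sB (τ i), Q, hsA, fun i => hsB (τ i), ?_⟩
        intro i j hij v hvi hvj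
        rw [hQ i] at hvi
        rw [hQ j] at hvj
        exact hdisjR i j hij v hvi hvj

lemma sep_partition {A S B : Set W} (hsep : IsSeparation G A S B) {v : W}
    (hvA : v ∉ A) (hvS : v ∉ S) : v ∈ B := by
  have hv : v ∈ A ∪ S ∪ B := hsep.union_eq ▸ Set.mem_univ v
  rcases hv with (hv | hv) | hv
  · exact absurd hv hvA
  · exact absurd hv hvS
  · exact hv

lemma stayA {A S B : Set W} (hsep : IsSeparation G A S B) {u z : W} (p : G.Walk u z)
    (hu : u ∈ A) (hS : ∀ v ∈ p.support, v ∉ S) : ∀ v ∈ p.support, v ∈ A := by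
  induction p with
  | nil =>
    intro v hv
    rw [support_nil, List.mem_singleton] at hv
    exact hv ▸ hu
  | @cons a c b h' p' ihp =>
    intro v hv
    rw [support_cons, List.mem_cons] at hv
    have hcS : c ∉ S := hS c (by simp)
    have hcA : c ∈ A := by
      by_contra hcA
      have hcB : c ∈ B := sep_partition hsep hcA hcS
      exact hsep.no_adj hu hcB h'
    rcases hv with rfl | hv
    · exact hu
    · exact ihp hcA (fun w hw => hS w (by simp [hw])) v hv

lemma stayB {A S B : Set W} (hsep : IsSeparation G A S B) {u z : W} (p : G.Walk u z)
    (hu : u ∈ B) (hS : ∀ v ∈ p.support, v ∉ S) : ∀ v ∈ p.support, v ∈ B := by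
  induction p with
  | nil =>
    intro v hv
    rw [support_nil, List.mem_singleton] at hv
    exact hv ▸ hu
  | @cons a c b h' p' ihp =>
    intro v hv
    rw [support_cons, List.mem_cons] at hv
    have hcS : c ∉ S := hS c (by simp)
    have hcB : c ∈ B := by
      by_contra hcB'
      by_cases hcA : c ∈ A
      · exact hsep.no_adj hcA hu h'.symm
      · exact hcB' (sep_partition hsep hcA hcS)
    rcases hv with rfl | hv
    · exact hu
    · exact ihp hcB (fun w hw => hS w (by simp [hw])) v hv

lemma mem_unionBS [DecidableEq W] {A S B : Set W} (hsep : IsSeparation G A S B)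
    {u z : W} (p : G.Walk u z) (hu : u ∈ S) (hz : z ∈ B ∪ S)
    (hS : ∀ v ∈ p.support, v ∈ S → v = u) (hcnt : p.support.count u = 1) :
    ∀ v ∈ p.support, v ∈ B ∪ S := by
  cases p with
  | nil =>
    intro v hv
    rw [support_nil, List.mem_singleton] at hv
    exact hv ▸ Or.inr hu
  | @cons _ c _ h' p' =>
    have hup' : u ∉ p'.support := by
      intro hup
      rw [support_cons, List.count_cons_self] at hcnt
      have : 0 < p'.support.count u := List.count_pos_iff.mpr hup
      omega
    have htailS : ∀ v ∈ p'.support, v ∉ S := by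
      intro v hv hvS
      have : v = u := hS v (by simp [hv]) hvS
      exact hup' (this ▸ hv)
    have hcS : c ∉ S := htailS c (by simp)
    intro v hv
    rw [support_cons, List.mem_cons] at hv
    rcases hv with rfl | hv
    · exact Or.inr hu
    · by_cases hcA : c ∈ A
      · exfalso
        have hzA : z ∈ A := stayA hsep p' hcA htailS z (end_mem_support _)
        rcases hz with hz | hz
        · exact Set.disjoint_left.mp hsep.disjoint_AB hzA hz
        · exact Set.disjoint_left.mp hsep.disjoint_AS hzA hz
      · have hcB : c ∈ B := sep_partition hsep hcA hcS
        exact Or.inl (stayB hsep p' hcB htailS v hv)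

/-- Extraction of a structured linkage from `S` into `Y ⊆ B ∪ S`. -/
lemma exists_linkage [Fintype W] [DecidableEq W] {A S B Y : Set W}
    (hsep : IsSeparation G A S B) (hY : Y ⊆ B ∪ S) (hlink : LinkedInto G S Y) :
    ∃ (endp : W → W) (P : (s : W) → s ∈ S → G.Walk s (endp s)),
      (∀ s (hs : s ∈ S), endp s ∈ Y) ∧
      (∀ s (hs : s ∈ S), ∀ v ∈ (P s hs).support, v ∈ S → v = s) ∧
      (∀ s (hs : s ∈ S), ∀ v ∈ (P s hs).support, v ∈ B ∪ S) ∧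
      (∀ s (hs : s ∈ S) s' (hs' : s' ∈ S), s ≠ s' →
        ∀ v, v ∈ (P s hs).support → v ∉ (P s' hs').support) := by
  have hsep' : ∀ C : Set W, IsSep G S Y C → S.ncard ≤ C.ncard := by
    intro C hC
    have h1 : flowG G S Y ≤ C.ncard := Nat.sInf_le ⟨C, hC, rfl⟩
    rwa [hlink] at h1
  classical
  obtain ⟨st, en, w, hst, hen, hdisj⟩ :=
    menger_aux G.edgeSet.ncard G le_rfl S Y S.ncard hsep'
  have htrim : ∀ i, ∃ c ∈ S, ∃ q : G.Walk (en i) c,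
      (∀ v ∈ q.support, v ∈ S → v = c) ∧
      q.support.count c = 1 ∧
      (∀ z, q.support.count z ≤ (w i).reverse.support.count z) ∧
      (∀ e ∈ q.edges, e ∈ (w i).reverse.edges) := by
    intro i
    exact exists_firstHit S (w i).reverse
      ⟨st i, hst i, by rw [support_reverse, List.mem_reverse]; exact start_mem_support _⟩
  choose c hcS q hq1 hq2 hq3 hq4 using htrim
  have hqsub : ∀ i, ∀ v ∈ (q i).support, v ∈ (w i).support := by
    intro i v hv
    have := mem_of_count_walk (hq3 i) hv
    rwa [support_reverse, List.mem_reverse] at this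
  have hcinj : Function.Injective c := by
    intro i j hij
    by_contra hij'
    exact hdisj i j hij' (c i) (hqsub i _ (end_mem_support _))
      (by rw [hij]; exact hqsub j _ (end_mem_support _))
  have hsurj := surj_of_inj_card (Set.toFinite S) rfl hcS hcinj
  choose inv hinv using hsurj
  refine ⟨fun s => if h : s ∈ S then en (inv s h) else s,
    fun s hs => ((q (inv s hs)).reverse.copy (hinv s hs) rfl).copy rfl
      (dif_pos hs : (if h : s ∈ S then en (inv s h) else s) = en (inv s hs)).symm,
    ?_, ?_, ?_, ?_⟩
  · intro s hs
    simp only [dif_pos hs]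
    exact hen _
  · intro s hs v hv
    rw [support_copy, support_copy, support_reverse, List.mem_reverse] at hv
    intro hvS
    rw [← hinv s hs]
    exact hq1 _ v hv hvS
  · intro s hs v hv
    have hz : (if h : s ∈ S then en (inv s h) else s) ∈ B ∪ S := by
      rw [dif_pos hs]
      exact hY (hen _)
    refine mem_unionBS hsep _ hs hz ?_ ?_ v hv
    · intro x hx hxS
      rw [support_copy, support_copy, support_reverse, List.mem_reverse] at hx
      rw [← hinv s hs]
      exact hq1 _ x hx hxS
    · rw [support_copy, support_copy, support_reverse, List.count_reverse]
      obtain ⟨i, hi⟩ : ∃ i, inv s hs = i := ⟨_, rfl⟩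
      have hcs : c i = s := by rw [← hi]; exact hinv s hs
      rw [hi, ← hcs]
      exact hq2 i
  · intro s hs s' hs' hne v hv hv'
    rw [support_copy, support_copy, support_reverse, List.mem_reverse] at hv hv'
    have hii : inv s hs ≠ inv s' hs' := by
      intro h
      apply hne
      rw [← hinv s hs, ← hinv s' hs', h]
    exact hdisj _ _ hii v (hqsub _ v hv) (hqsub _ v hv')

end Aux

section Aux2

open SimpleGraph Walk

variable {V : Type} {κ : Type*} {G : SimpleGraph V} {T : SimpleGraph κ}
  {bag : κ → Set V} {X : Set V}

lemma conn_along_walk [DecidableEq V] (htd : IsTorsoTreeDecomp G X T bag) :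
    ∀ {a b : V} (p : G.Walk a b), b ∈ X →
      (T.induce {t | ∃ z ∈ p.support, z ∈ X ∧ z ∈ bag t}).Connected := by
  intro a b p
  induction p with
  | @nil u =>
    intro hb
    have hset : {t | ∃ z ∈ (Walk.nil : G.Walk u u).support, z ∈ X ∧ z ∈ bag t}
        = {t | u ∈ bag t} := by
      ext t
      simp [hb]
    rw [hset]
    exact htd.conn u hb
  | @cons a c b h' p' ihp =>
    intro hb
    have hIH := ihp hb
    by_cases ha : a ∈ X
    case neg =>
      have hset : {t | ∃ z ∈ (Walk.cons h' p').support, z ∈ X ∧ z ∈ bag t}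
          = {t | ∃ z ∈ p'.support, z ∈ X ∧ z ∈ bag t} := by
        ext t
        simp only [support_cons, List.mem_cons, Set.mem_setOf_eq]
        constructor
        · rintro ⟨z, rfl | hz, hzX, hzb⟩
          · exact absurd hzX ha
          · exact ⟨z, hz, hzX, hzb⟩
        · rintro ⟨z, hz, hzX, hzb⟩
          exact ⟨z, Or.inr hz, hzX, hzb⟩
      rw [hset]
      exact hIH
    case pos =>
      have hset : {t | ∃ z ∈ (Walk.cons h' p').support, z ∈ X ∧ z ∈ bag t}
          = {t | a ∈ bag t} ∪ {t | ∃ z ∈ p'.support, z ∈ X ∧ z ∈ bag t} := by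
        ext t
        simp only [support_cons, List.mem_cons, Set.mem_setOf_eq, Set.mem_union]
        constructor
        · rintro ⟨z, rfl | hz, hzX, hzb⟩
          · exact Or.inl hzb
          · exact Or.inr ⟨z, hz, hzX, hzb⟩
        · rintro (hzb | ⟨z, hz, hzX, hzb⟩)
          · exact ⟨a, Or.inl rfl, ha, hzb⟩
          · exact ⟨z, Or.inr hz, hzX, hzb⟩
      rw [hset]
      obtain ⟨z, hzX, q, hq1, hq2, hq3, hq4⟩ :=
        exists_firstHit X p' ⟨b, hb, end_mem_support _⟩
      have hzp' : z ∈ p'.support := mem_of_count_walk hq3 (end_mem_support q)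
      by_cases haz : a = z
      · have hsub : {t | a ∈ bag t} ⊆ {t | ∃ z' ∈ p'.support, z' ∈ X ∧ z' ∈ bag t} :=
          fun t ht => ⟨z, hzp', hzX, haz ▸ ht⟩
        rw [Set.union_eq_self_of_subset_left hsub]
        exact hIH
      · have hadj : (torsoGraph G X).Adj a z := by
          refine ⟨haz, ha, hzX, Walk.cons h' q, ?_⟩
          intro w hw
          rw [support_cons, List.mem_cons] at hw
          rcases hw with rfl | hw
          · exact Or.inl rfl
          · by_cases hwX : w ∈ X
            · exact Or.inr (Or.inl (hq1 w hw hwX))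
            · exact Or.inr (Or.inr hwX)
        obtain ⟨t₀, hat₀, hzt₀⟩ := htd.edge_bag hadj
        exact induce_union_connected (htd.conn a ha).preconnected hIH.preconnected ⟨t₀, hat₀, ⟨z, hzp', hzX, hzt₀⟩⟩

/-- A hom from an induced subgraph to the ambient graph. -/
def valHom {s : Set V} : G.induce s →g G :=
  ⟨Subtype.val, fun {a b} h => h⟩

/-- Either a walk in `G ◁ (A, S)` only uses `G`-edges, or it contains two distinct
vertices of `S`. -/
lemma restrict_walk_split {A S : Set V} :
    ∀ {u v : ↥(A ∪ S)} (p : (restrictGraph G A S).Walk u v),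
      (∃ q : G.Walk ↑u ↑v, q.support = p.support.map Subtype.val) ∨
      (∃ a b : ↥(A ∪ S), (↑a : V) ∈ S ∧ (↑b : V) ∈ S ∧ a ≠ b ∧
        a ∈ p.support ∧ b ∈ p.support) := by
  intro u v p
  induction p with
  | nil => exact Or.inl ⟨Walk.nil, by simp⟩
  | @cons u c v h' p' ihp =>
    rcases ihp with ⟨q', hq'⟩ | ⟨a, b, h1, h2, h3, h4, h5⟩
    · by_cases hG : G.Adj ↑u ↑c
      · exact Or.inl ⟨Walk.cons hG q', by simp [hq']⟩
      · have hcl : (↑u : V) ∈ S ∧ (↑c : V) ∈ S := by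
          rcases h' with h' | h'
          · exact absurd h' hG
          · exact ⟨h'.2.1, h'.2.2⟩
        exact Or.inr ⟨u, c, hcl.1, hcl.2, h'.ne, by simp, by simp⟩
    · exact Or.inr ⟨a, b, h1, h2, h3, by simp [h4], by simp [h5]⟩

end Aux2

section Main

open SimpleGraph Walk

/-- The main construction: a solution of `I` is transformed into a solution of
`I ◁ (A, S)`, given that `S` is linked into `(B ∪ S) ∩ Wb`. -/
lemma half_yes {V : Type} [Fintype V] (G : SimpleGraph V) (Ws : Set (Set V)) (k : ℕ)
    (hWscl : ∀ W ∈ Ws, G.IsClique W)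
    (A S B : Set V) (hsep : IsSeparation G A S B)
    (Wb : Set V) (hWb : Wb ∈ Ws)
    (hlink : LinkedInto G S ((B ∪ S) ∩ Wb))
    (hyes : IsYesInstance G Ws k) :
    IsYesInstance (restrictGraph G A S) (restrictSets Ws A S) k := by
  classical
  obtain ⟨κ, T, bag, X, ⟨htd, hcov, hwid⟩⟩ := hyes
  have hYsub : (B ∪ S) ∩ Wb ⊆ B ∪ S := Set.inter_subset_left
  obtain ⟨endp, P, hend, hPS, hPBS, hPdisj⟩ := exists_linkage hsep hYsub hlink
  set SupP : V → Set V := fun s => ⋃ (h : s ∈ S), {v | v ∈ (P s h).support} with hSupP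
  have hSupP_mem : ∀ s (hs : s ∈ S) (v : V), v ∈ SupP s ↔ v ∈ (P s hs).support := by
    intro s hs v
    simp only [hSupP, Set.mem_iUnion, Set.mem_setOf_eq]
    exact ⟨fun ⟨h, hv⟩ => hv, fun hv => ⟨hs, hv⟩⟩
  have hWbX : Wb ⊆ X := fun v hv => hcov ⟨Wb, hWb, hv⟩
  have hendX : ∀ s (hs : s ∈ S), endp s ∈ X := fun s hs => hWbX (hend s hs).2
  have hendWb : ∀ s (hs : s ∈ S), endp s ∈ Wb := fun s hs => (hend s hs).2
  -- membership of `B∪S`-vertices of `A∪S` in `S`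
  have hABS : ∀ v : ↥(A ∪ S), (↑v : V) ∈ B ∪ S → (↑v : V) ∈ S := by
    rintro v (hv | hv)
    · rcases v.2 with h | h
      · exact absurd hv (Set.disjoint_left.mp hsep.disjoint_AB h)
      · exact h
    · exact hv
  set XA : Set ↥(A ∪ S) := {v | (↑v : V) ∈ X ∨ (↑v : V) ∈ S} with hXA
  set bagA : κ → Set ↥(A ∪ S) := fun t =>
    {v | (↑v : V) ∈ bag t ∨ ((↑v : V) ∈ S ∧ (SupP ↑v ∩ X ∩ bag t).Nonempty)} with hbagA
  -- membership of a linkage endpoint in the data defining `bagA`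
  have hend_dat : ∀ s (hs : s ∈ S) t, endp s ∈ bag t → s ∈ S ∧
      (SupP s ∩ X ∩ bag t).Nonempty := by
    intro s hs t ht
    exact ⟨hs, ⟨endp s, ⟨⟨(hSupP_mem s hs _).mpr (end_mem_support _), hendX s hs⟩, ht⟩⟩⟩
  -- the edge-bag property, asymmetric version
  have edgeb_aux : ∀ u v : ↥(A ∪ S),
      (torsoGraph (restrictGraph G A S) XA).Adj u v → (↑v : V) ∉ S →
      ∃ t, u ∈ bagA t ∧ v ∈ bagA t := by
    intro u v hadj hvS
    obtain ⟨huv, huXA, hvXA, p, hp⟩ := hadj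
    have hvX : (↑v : V) ∈ X := by
      rcases hvXA with h | h
      · exact h
      · exact absurd h hvS
    rcases restrict_walk_split p with ⟨q, hq⟩ | ⟨a, b, haS, hbS, hab, hap, hbp⟩
    · -- all edges are `G`-edges
      have hsupp : ∀ w ∈ q.support, w = ↑u ∨ w = ↑v ∨ w ∉ X := by
        intro w hw
        rw [hq, List.mem_map] at hw
        obtain ⟨w', hw', rfl⟩ := hw
        rcases hp w' hw' with rfl | rfl | hw'
        · exact Or.inl rfl
        · exact Or.inr (Or.inl rfl)
        · refine Or.inr (Or.inr fun hX => hw' (Or.inl hX))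
      have hvalne : (↑u : V) ≠ ↑v := fun h => huv (Subtype.ext h)
      by_cases huX : (↑u : V) ∈ X
      · obtain ⟨t, h1, h2⟩ := htd.edge_bag ⟨hvalne, huX, hvX, q, hsupp⟩
        exact ⟨t, Or.inl h1, Or.inl h2⟩
      · have huS : (↑u : V) ∈ S := by
          rcases huXA with h | h
          · exact absurd h huX
          · exact h
        obtain ⟨x, hxX, pre, hpre1, hpre2, hpre3, _⟩ :=
          exists_firstHit X (P ↑u huS) ⟨endp ↑u, hendX _ huS, end_mem_support _⟩
        have hxP : x ∈ (P ↑u huS).support :=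
          mem_of_count_walk hpre3 (end_mem_support pre)
        have hxu : x ≠ ↑u := fun h => huX (h ▸ hxX)
        have hxB : x ∈ B := by
          rcases hPBS ↑u huS x hxP with h | h
          · exact h
          · exact absurd (hPS ↑u huS x hxP h) hxu
        have hxv : x ≠ ↑v := by
          rintro rfl
          rcases v.2 with h | h
          · exact Set.disjoint_left.mp hsep.disjoint_AB h hxB
          · exact Set.disjoint_left.mp hsep.disjoint_SB h hxB
        have htor : (torsoGraph G X).Adj x ↑v := by
          refine ⟨hxv, hxX, hvX, pre.reverse.append q, ?_⟩
          intro w hw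
          rw [mem_support_append_iff] at hw
          rcases hw with hw | hw
          · rw [support_reverse, List.mem_reverse] at hw
            by_cases hwX : w ∈ X
            · exact Or.inl (hpre1 w hw hwX)
            · exact Or.inr (Or.inr hwX)
          · rcases hsupp w hw with rfl | rfl | hwX
            · exact Or.inr (Or.inr huX)
            · exact Or.inr (Or.inl rfl)
            · exact Or.inr (Or.inr hwX)
        obtain ⟨t, hxt, hvt⟩ := htd.edge_bag htor
        refine ⟨t, Or.inr ⟨huS, ⟨x, ⟨⟨(hSupP_mem ↑u huS x).mpr hxP, hxX⟩, hxt⟩⟩⟩,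
          Or.inl hvt⟩
    · -- two distinct `S`-vertices on the walk: impossible since `↑v ∉ S`
      exfalso
      have ha' : a = u ∨ a = v := by
        rcases hp a hap with h | h | h
        · exact Or.inl h
        · exact Or.inr h
        · exact absurd (Or.inr haS) h
      have hb' : b = u ∨ b = v := by
        rcases hp b hbp with h | h | h
        · exact Or.inl h
        · exact Or.inr h
        · exact absurd (Or.inr hbS) h
      rcases ha' with rfl | rfl
      · rcases hb' with rfl | rfl
        · exact hab rfl
        · exact hvS hbS
      · exact hvS haS
  refine ⟨κ, T, bagA, XA, ⟨⟨htd.tree, ?_, ?_, ?_, ?_⟩, ?_, ?_⟩⟩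
  · -- bag_subset
    intro t v hv
    rcases hv with hv | hv
    · exact Or.inl (htd.bag_subset t hv)
    · exact Or.inr hv.1
  · -- mem_bag
    intro v hv
    by_cases hvX : (↑v : V) ∈ X
    · obtain ⟨t, ht⟩ := htd.mem_bag ↑v hvX
      exact ⟨t, Or.inl ht⟩
    · have hvS : (↑v : V) ∈ S := by
        rcases hv with h | h
        · exact absurd h hvX
        · exact h
      obtain ⟨t, ht⟩ := htd.mem_bag _ (hendX ↑v hvS)
      exact ⟨t, Or.inr (hend_dat ↑v hvS t ht)⟩
  · -- edge_bag
    intro u v hadj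
    by_cases hvS : (↑v : V) ∈ S
    · by_cases huS : (↑u : V) ∈ S
      · -- both in S: use the endpoints of the linkage in Wb
        have hvalne : (↑u : V) ≠ ↑v := fun h => hadj.1 (Subtype.ext h)
        have hwne : endp ↑u ≠ endp ↑v := by
          intro h
          refine hPdisj ↑u huS ↑v hvS hvalne (endp ↑u) (end_mem_support _) ?_
          rw [h]
          exact end_mem_support _
        have hGadj : G.Adj (endp ↑u) (endp ↑v) :=
          hWscl Wb hWb (hendWb _ huS) (hendWb _ hvS) hwne
        have htor : (torsoGraph G X).Adj (endp ↑u) (endp ↑v) := by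
          refine ⟨hwne, hendX _ huS, hendX _ hvS, Walk.cons hGadj Walk.nil, ?_⟩
          intro w hw
          simp only [support_cons, support_nil, List.mem_cons, List.mem_singleton] at hw
          rcases hw with rfl | rfl | h
          · exact Or.inl rfl
          · exact Or.inr (Or.inl rfl)
          · exact absurd h (by simp)
        obtain ⟨t, h1, h2⟩ := htd.edge_bag htor
        exact ⟨t, Or.inr (hend_dat ↑u huS t h1), Or.inr (hend_dat ↑v hvS t h2)⟩
      · obtain ⟨t, h1, h2⟩ := edgeb_aux v u hadj.symm huS
        exact ⟨t, h2, h1⟩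
    · exact edgeb_aux u v hadj hvS
  · -- conn
    intro v hv
    by_cases hvS : (↑v : V) ∈ S
    · have hset : {t | v ∈ bagA t}
          = {t | ∃ z ∈ (P ↑v hvS).support, z ∈ X ∧ z ∈ bag t} := by
        ext t
        simp only [hbagA, Set.mem_setOf_eq]
        constructor
        · rintro (ht | ⟨-, z, ⟨⟨hzP, hzX⟩, hzb⟩⟩)
          · exact ⟨↑v, start_mem_support _, htd.bag_subset t ht, ht⟩
          · exact ⟨z, (hSupP_mem ↑v hvS z).mp hzP, hzX, hzb⟩
        · rintro ⟨z, hz, hzX, hzb⟩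
          exact Or.inr ⟨hvS, ⟨z, ⟨⟨(hSupP_mem ↑v hvS z).mpr hz, hzX⟩, hzb⟩⟩⟩
      rw [hset]
      exact conn_along_walk htd (P ↑v hvS) (hendX ↑v hvS)
    · have hvX : (↑v : V) ∈ X := by
        rcases hv with h | h
        · exact h
        · exact absurd h hvS
      have hset : {t | v ∈ bagA t} = {t | (↑v : V) ∈ bag t} := by
        ext t
        simp only [hbagA, Set.mem_setOf_eq]
        constructor
        · rintro (ht | ⟨hS, -⟩)
          · exact ht
          · exact absurd hS hvS
        · exact fun ht => Or.inl ht
      rw [hset]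
      exact htd.conn ↑v hvX
  · -- cover
    intro v hv
    obtain ⟨t, ht, hvt⟩ := hv
    obtain ⟨Wc, hWc, rfl⟩ := ht
    rcases hWc with ⟨hWc, -⟩ | ⟨rfl, -⟩
    · exact Or.inl (hcov ⟨Wc, hWc, hvt⟩)
    · exact Or.inr hvt
  · -- width
    intro t
    have hle : (bagA t).ncard ≤ (bag t).ncard := by
      set f : ↥(A ∪ S) → V := fun v =>
        if (↑v : V) ∈ bag t then ↑v
        else if h2 : (SupP ↑v ∩ X ∩ bag t).Nonempty then h2.some else ↑v with hf
      have hmapsTo : ∀ v ∈ bagA t, f v ∈ bag t := by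
        intro v hv
        simp only [hf]
        by_cases h1 : (↑v : V) ∈ bag t
        · rw [if_pos h1]
          exact h1
        · rcases hv with hv | hv
          · exact absurd hv h1
          · rw [if_neg h1, dif_pos hv.2]
            exact hv.2.some_mem.2
      have hS_of_mem : ∀ (v : ↥(A ∪ S)) (s : V) (hs : s ∈ S),
          (↑v : V) ∈ SupP s → (↑v : V) ∈ S := by
        intro v s hs hv
        exact hABS v (hPBS s hs ↑v ((hSupP_mem s hs _).mp hv))
      have hinj : Set.InjOn f (bagA t) := by
        intro v hv v' hv' heq
        simp only [hf] at heq
        by_cases h1 : (↑v : V) ∈ bag t <;> by_cases h1' : (↑v' : V) ∈ bag t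
        · rw [if_pos h1, if_pos h1'] at heq
          exact Subtype.ext heq
        · -- v in bag, v' not
          have hv'S : (↑v' : V) ∈ S ∧ (SupP ↑v' ∩ X ∩ bag t).Nonempty := by
            rcases hv' with h | h
            · exact absurd h h1'
            · exact h
          rw [if_pos h1, if_neg h1', dif_pos hv'S.2] at heq
          have hz := hv'S.2.some_mem
          rw [← heq] at hz
          have hvS : (↑v : V) ∈ S := hS_of_mem v ↑v' hv'S.1 hz.1.1
          have : (↑v : V) = ↑v' :=
            hPS ↑v' hv'S.1 ↑v ((hSupP_mem ↑v' hv'S.1 _).mp hz.1.1) hvS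
          exact Subtype.ext this
        · have hvS : (↑v : V) ∈ S ∧ (SupP ↑v ∩ X ∩ bag t).Nonempty := by
            rcases hv with h | h
            · exact absurd h h1
            · exact h
          rw [if_neg h1, if_pos h1', dif_pos hvS.2] at heq
          have hz := hvS.2.some_mem
          rw [heq] at hz
          have hv'S : (↑v' : V) ∈ S := hS_of_mem v' ↑v hvS.1 hz.1.1
          have : (↑v' : V) = ↑v :=
            hPS ↑v hvS.1 ↑v' ((hSupP_mem ↑v hvS.1 _).mp hz.1.1) hv'S
          exact Subtype.ext this.symm
        · have hvS : (↑v : V) ∈ S ∧ (SupP ↑v ∩ X ∩ bag t).Nonempty := by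
            rcases hv with h | h
            · exact absurd h h1
            · exact h
          have hv'S : (↑v' : V) ∈ S ∧ (SupP ↑v' ∩ X ∩ bag t).Nonempty := by
            rcases hv' with h | h
            · exact absurd h h1'
            · exact h
          rw [if_neg h1, if_neg h1', dif_pos hvS.2, dif_pos hv'S.2] at heq
          have hz := hvS.2.some_mem
          have hz' := hv'S.2.some_mem
          rw [heq] at hz
          by_contra hne
          have hvalne : (↑v : V) ≠ ↑v' := fun h => hne (Subtype.ext h)
          exact hPdisj ↑v hvS.1 ↑v' hv'S.1 hvalne _
            ((hSupP_mem ↑v hvS.1 _).mp hz.1.1)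
            ((hSupP_mem ↑v' hv'S.1 _).mp hz'.1.1)
      exact Set.ncard_le_ncard_of_injOn f hmapsTo hinj (Set.toFinite _)
    exact le_trans hle (hwid t)

end Main

/-- If `(A, S, B)` is a safe separation of the instance `I = (G, Ws, k)` and `I` is a
yes-instance, then both `I ◁ (A, S)` and `I ◁ (B, S)` are yes-instances. -/
theorem safe_separation_yes {V : Type} [Fintype V]
    (G : SimpleGraph V) (Ws : Set (Set V)) (k : ℕ)
    (hI : IsPSTWInstance G Ws k)
    (A S B : Set V) (hsafe : IsSafeSeparation G Ws A S B)
    (hyes : IsYesInstance G Ws k) :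
    IsYesInstance (restrictGraph G A S) (restrictSets Ws A S) k ∧
    IsYesInstance (restrictGraph G B S) (restrictSets Ws B S) k := by
  obtain ⟨hsep, hAne, hBne, Wa, hWa, Wb, hWb, hlinkA, hlinkB⟩ := hsafe
  have hWscl : ∀ W ∈ Ws, G.IsClique W := fun W hW => (hI.2.2.2 W hW).1
  have hsep' : IsSeparation G B S A :=
    { disjoint_AS := hsep.disjoint_SB.symm
      disjoint_AB := hsep.disjoint_AB.symm
      disjoint_SB := hsep.disjoint_AS.symm
      union_eq := by
        have h := hsep.union_eq
        rw [Set.eq_univ_iff_forall] at h ⊢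
        intro v
        rcases h v with (hv | hv) | hv
        · exact Or.inr hv
        · exact Or.inl (Or.inr hv)
        · exact Or.inl (Or.inl hv)
      no_adj := fun b a hb ha hadj => hsep.no_adj ha hb hadj.symm }
  exact ⟨half_yes G Ws k hWscl A S B hsep Wb hWb hlinkB hyes,
    half_yes G Ws k hWscl B S A hsep' Wa hWa hlinkA hyes⟩
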